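/- In any geodesic immersion of K_{3,3} in the 2-sphere such that no three vertices lie on a common great circle, every 4-cycle of K_{3,3} has at most one self-crossing; consequently the immersion has at most nine edge crossings in total. -/

import Mathlib

open scoped Classical

noncomputable section

/-- Points of `ℝ³`. -/
abbrev E3 := EuclideanSpace ℝ (Fin 3)

/-- The interior of the shortest geodesic arc joining `X` and `Y` on the unit
sphere: normalizations of strictly positive combinations of `X` and `Y`. -/
def ArcInt (X Y : E3) : Set E3 :=
  {z | ∃ a b : ℝ, 0 < a ∧ 0 < b ∧ z = ‖a • X + b • Y‖⁻¹ • (a • X + b • Y)}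

/-- Two geodesic edges `XY` and `ZW` on the sphere cross if they share a point
interior to both. -/
def Crosses (X Y Z W : E3) : Prop := (ArcInt X Y ∩ ArcInt Z W).Nonempty

/-- Vertices of `K₃,₃`: indices `0,2,4` form one part (labels `1,3,5`). -/
def oI : Fin 3 → Fin 6 := ![0, 2, 4]

/-- Indices `1,3,5` form the other part (labels `2,4,6`). -/
def eI : Fin 3 → Fin 6 := ![1, 3, 5]

/-- A geodesic immersion of `K₃,₃` in the unit sphere: all vertices are unit
vectors and no three of them lie on a common great circle. -/
def GoodImm (v : Fin 6 → E3) : Prop :=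
  (∀ i, ‖v i‖ = 1) ∧
    ∀ i j k : Fin 6, i ≠ j → i ≠ k → j ≠ k → LinearIndependent ℝ ![v i, v j, v k]

/-- The number of crossings of the immersion: the number of unordered pairs of
disjoint edges whose geodesic arcs cross.  An edge is a pair `(a, b)`, joining
vertex `oI a` to vertex `eI b`. -/
def crossingCount (v : Fin 6 → E3) : ℕ :=
  (Finset.univ.filter fun p : (Fin 3 × Fin 3) × (Fin 3 × Fin 3) =>
    p.1.1 < p.2.1 ∧ p.1.2 ≠ p.2.2 ∧
      Crosses (v (oI p.1.1)) (v (eI p.1.2)) (v (oI p.2.1)) (v (eI p.2.2))).card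

/-- The edge `(a,b)` of `K₃,₃` has no crossings with any other edge. -/
def EdgeFree (v : Fin 6 → E3) (p : Fin 3 × Fin 3) : Prop :=
  ∀ q : Fin 3 × Fin 3, q ≠ p →
    ¬ Crosses (v (oI p.1)) (v (eI p.2)) (v (oI q.1)) (v (eI q.2))


lemma li_pair {x y z : E3} (h : LinearIndependent ℝ ![x, y, z]) :
    LinearIndependent ℝ ![x, y] := by
  have h2 := h.comp ![0, 1] (by decide)
  have he : ![x, y, z] ∘ ![0, 1] = ![x, y] := by
    funext i; fin_cases i <;> rfl
  rwa [he] at h2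

lemma cross_rel {X Y Z W : E3} (hXY : LinearIndependent ℝ ![X, Y])
    (hZW : LinearIndependent ℝ ![Z, W]) (h : Crosses X Y Z W) :
    ∃ a b c d : ℝ, 0 < a ∧ 0 < b ∧ 0 < c ∧ 0 < d ∧
      a • X + b • Y = c • Z + d • W := by
  obtain ⟨p, ⟨a, b, ha, hb, hp⟩, ⟨c, d, hc, hd, hq⟩⟩ := h
  have hu : a • X + b • Y ≠ 0 := fun h0 =>
    ha.ne' ((LinearIndependent.pair_iff.mp hXY a b h0).1)
  have hw : c • Z + d • W ≠ 0 := fun h0 =>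
    hc.ne' ((LinearIndependent.pair_iff.mp hZW c d h0).1)
  have hn1 : (0:ℝ) < ‖a • X + b • Y‖ := norm_pos_iff.mpr hu
  have hn2 : (0:ℝ) < ‖c • Z + d • W‖ := norm_pos_iff.mpr hw
  refine ⟨a, b, ‖a • X + b • Y‖ * ‖c • Z + d • W‖⁻¹ * c,
      ‖a • X + b • Y‖ * ‖c • Z + d • W‖⁻¹ * d, ha, hb, by positivity, by positivity, ?_⟩
  have he : ‖a • X + b • Y‖⁻¹ • (a • X + b • Y)
      = ‖c • Z + d • W‖⁻¹ • (c • Z + d • W) := hp.symm.trans hq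
  have he2 : a • X + b • Y
      = (‖a • X + b • Y‖ * ‖c • Z + d • W‖⁻¹) • (c • Z + d • W) := by
    rw [mul_smul, ← he, smul_smul, mul_inv_cancel₀ hn1.ne', one_smul]
  have he3 : (‖a • X + b • Y‖ * ‖c • Z + d • W‖⁻¹ * c) • Z
      + (‖a • X + b • Y‖ * ‖c • Z + d • W‖⁻¹ * d) • W
      = (‖a • X + b • Y‖ * ‖c • Z + d • W‖⁻¹) • (c • Z + d • W) := by
    rw [smul_add, smul_smul, smul_smul]
  rw [he3]
  exact he2

lemma no_double {A B C D : E3}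
    (hABC : LinearIndependent ℝ ![A, B, C])
    (hCD : LinearIndependent ℝ ![C, D])
    (hAD : LinearIndependent ℝ ![A, D]) (hCB : LinearIndependent ℝ ![C, B])
    (h1 : Crosses A B C D) (h2 : Crosses A D C B) : False := by
  obtain ⟨a, b, c, d, ha, hb, hc, hd, e1⟩ := cross_rel (li_pair hABC) hCD h1
  obtain ⟨a', d', c', b', ha', hd', hc', hb', e2⟩ := cross_rel hAD hCB h2
  have key : (d' * a + d * a') • A + (d' * b - d * b') • B
      + (-(d' * c + d * c')) • C = 0 := by
    linear_combination (norm := module) d' • e1 + d • e2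
  have h0 := Fintype.linearIndependent_iff.mp hABC
    ![d' * a + d * a', d' * b - d * b', -(d' * c + d * c')]
    (by simpa [Fin.sum_univ_three] using key) 0
  simp only [Matrix.cons_val_zero] at h0
  nlinarith [mul_pos hd' ha, mul_pos hd ha']

/-- In any geodesic immersion of `K₃,₃` in the sphere (no three vertices on a
common great circle), every 4-cycle has at most one self-crossing (its two pairs
of opposite edges cannot both cross), and consequently there are at most nine
crossings in total. -/
theorem K33_at_most_nine_crossings (v : Fin 6 → E3) (h : GoodImm v) :
    (∀ a c b d : Fin 3, a ≠ c → b ≠ d →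
      ¬ (Crosses (v (oI a)) (v (eI b)) (v (oI c)) (v (eI d)) ∧
         Crosses (v (oI a)) (v (eI d)) (v (oI c)) (v (eI b)))) ∧
    crossingCount v ≤ 9 := by
  obtain ⟨hnorm, hli⟩ := h
  have hoI : Function.Injective oI := by decide
  have heI : Function.Injective eI := by decide
  have hne : ∀ (i j : Fin 3), oI i ≠ eI j := by decide
  have part1 : ∀ a c b d : Fin 3, a ≠ c → b ≠ d →
      ¬ (Crosses (v (oI a)) (v (eI b)) (v (oI c)) (v (eI d)) ∧
         Crosses (v (oI a)) (v (eI d)) (v (oI c)) (v (eI b))) := by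
    rintro a c b d hac hbd ⟨h1, h2⟩
    have hac' : oI a ≠ oI c := fun e => hac (hoI e)
    exact no_double (hli (oI a) (eI b) (oI c) (hne a b) hac' (hne c b).symm)
      (li_pair (hli (oI c) (eI d) (oI a) (hne c d) hac'.symm (hne a d).symm))
      (li_pair (hli (oI a) (eI d) (oI c) (hne a d) hac' (hne c d).symm))
      (li_pair (hli (oI c) (eI b) (oI a) (hne c b) hac'.symm (hne a b).symm))
      h1 h2
  refine ⟨part1, ?_⟩
  have hmin : ∀ b d b' d' : Fin 3, b ≠ d → b' ≠ d' → min b d = min b' d' →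
      max b d = max b' d' → (b = b' ∧ d = d') ∨ (b = d' ∧ d = b') := by decide
  have hle : crossingCount v ≤ (Finset.univ.filter
      (fun q : (Fin 3 × Fin 3) × (Fin 3 × Fin 3) =>
        q.1.1 < q.2.1 ∧ q.1.2 < q.2.2)).card := by
    apply Finset.card_le_card_of_injOn
      (fun p => ((p.1.1, min p.1.2 p.2.2), (p.2.1, max p.1.2 p.2.2)))
    · intro p hp
      simp only [Finset.coe_filter, Finset.mem_filter, Finset.mem_univ, true_and, Set.mem_setOf_eq] at hp ⊢
      exact ⟨hp.1, min_lt_max.mpr hp.2.1⟩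
    · intro p hp p' hp' hfe
      simp only [Finset.coe_filter, Finset.mem_univ, true_and, Set.mem_setOf_eq] at hp hp'
      obtain ⟨ha1, hb1, hc1⟩ := hp
      obtain ⟨ha2, hb2, hc2⟩ := hp'
      have e1 : p.1.1 = p'.1.1 := congrArg (fun q => q.1.1) hfe
      have e2 : p.2.1 = p'.2.1 := congrArg (fun q => q.2.1) hfe
      have e3 : min p.1.2 p.2.2 = min p'.1.2 p'.2.2 := congrArg (fun q => q.1.2) hfe
      have e4 : max p.1.2 p.2.2 = max p'.1.2 p'.2.2 := congrArg (fun q => q.2.2) hfe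
      rcases hmin _ _ _ _ hb1 hb2 e3 e4 with ⟨hb, hd⟩ | ⟨hb, hd⟩
      · exact Prod.ext (Prod.ext e1 hb) (Prod.ext e2 hd)
      · exfalso
        apply part1 p.1.1 p.2.1 p.1.2 p.2.2 (ne_of_lt ha1) hb1
        refine ⟨hc1, ?_⟩
        rw [e1, e2, hd, hb]
        exact hc2
  calc crossingCount v ≤ _ := hle
    _ = 9 := by decide


end
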